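/- Let 𝔰 ⊂ sl(3,ℂ) be the subalgebra of trace-zero matrices whose third row and third column vanish (the upper-left embedded copy of sl(2,ℂ)). Set V₊ = span_ℂ{e₁₃, e₂₃}, V₋ = span_ℂ{e₃₁, e₃₂}, and h = diag(1,1,−2). If 𝔩 is a complex Lie subalgebra of sl(3,ℂ) with 𝔰 ⊆ 𝔩 and dim_ℂ 𝔩 ≥ 5, then 𝔩 is one of the following five subalgebras: 𝔰 ⊕ V₊, 𝔰 ⊕ V₋, 𝔰 ⊕ V₊ ⊕ ℂh, 𝔰 ⊕ V₋ ⊕ ℂh, or sl(3,ℂ). -/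

import Mathlib

attribute [local instance 100] LieRing.ofAssociativeRing

/-- `sl(3,ℂ)`, as the set of trace-zero `3×3` complex matrices. -/
def sl3 : Set (Matrix (Fin 3) (Fin 3) ℂ) := {X | Matrix.trace X = 0}

/-- The upper-left embedded copy `𝔰 ≅ sl(2,ℂ)`: trace-zero matrices whose third row and
third column vanish. -/
def slTwo : Set (Matrix (Fin 3) (Fin 3) ℂ) :=
  {X | X ∈ sl3 ∧ (∀ j, X 2 j = 0) ∧ (∀ i, X i 2 = 0)}

/-- The matrix element `e₁₃`. -/
def e13 : Matrix (Fin 3) (Fin 3) ℂ := Matrix.single 0 2 1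

/-- The matrix element `e₂₃`. -/
def e23 : Matrix (Fin 3) (Fin 3) ℂ := Matrix.single 1 2 1

/-- The matrix element `e₃₁`. -/
def e31 : Matrix (Fin 3) (Fin 3) ℂ := Matrix.single 2 0 1

/-- The matrix element `e₃₂`. -/
def e32 : Matrix (Fin 3) (Fin 3) ℂ := Matrix.single 2 1 1

/-- The diagonal matrix `h = diag(1,1,−2)`. -/
def hDiag : Matrix (Fin 3) (Fin 3) ℂ := Matrix.diagonal ![1, 1, -2]

/-- The direct sum `𝔰 ⊕ V₊` where `V₊ = span{e₁₃, e₂₃}`. -/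
def sVplus : Set (Matrix (Fin 3) (Fin 3) ℂ) :=
  {X | ∃ s ∈ slTwo, ∃ c₁ c₂ : ℂ, X = s + c₁ • e13 + c₂ • e23}

/-- The direct sum `𝔰 ⊕ V₋` where `V₋ = span{e₃₁, e₃₂}`. -/
def sVminus : Set (Matrix (Fin 3) (Fin 3) ℂ) :=
  {X | ∃ s ∈ slTwo, ∃ c₁ c₂ : ℂ, X = s + c₁ • e31 + c₂ • e32}

/-- The direct sum `𝔰 ⊕ V₊ ⊕ ℂh`. -/
def sVplusH : Set (Matrix (Fin 3) (Fin 3) ℂ) :=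
  {X | ∃ s ∈ slTwo, ∃ c₁ c₂ c₃ : ℂ, X = s + c₁ • e13 + c₂ • e23 + c₃ • hDiag}

/-- The direct sum `𝔰 ⊕ V₋ ⊕ ℂh`. -/
def sVminusH : Set (Matrix (Fin 3) (Fin 3) ℂ) :=
  {X | ∃ s ∈ slTwo, ∃ c₁ c₂ c₃ : ℂ, X = s + c₁ • e31 + c₂ • e32 + c₃ • hDiag}

def e12' : Matrix (Fin 3) (Fin 3) ℂ := Matrix.single 0 1 1
def e21' : Matrix (Fin 3) (Fin 3) ℂ := Matrix.single 1 0 1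
def hp : Matrix (Fin 3) (Fin 3) ℂ := Matrix.diagonal ![1, -1, 0]

noncomputable def sPart (X : Matrix (Fin 3) (Fin 3) ℂ) : Matrix (Fin 3) (Fin 3) ℂ :=
  Matrix.of ![![(X 0 0 - X 1 1)/2, X 0 1, 0], ![X 1 0, (X 1 1 - X 0 0)/2, 0], ![0, 0, 0]]

def gen (t a b c d : ℂ) : Matrix (Fin 3) (Fin 3) ℂ :=
  t • hDiag + a • e13 + b • e23 + c • e31 + d • e32

lemma e12'_mem : e12' ∈ slTwo := by
  refine ⟨?_, ?_, ?_⟩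
  · simp [sl3, Matrix.trace_fin_three, e12', Matrix.single, Matrix.vecHead, Matrix.vecTail]
  · intro j; fin_cases j <;> simp [e12', Matrix.single, Matrix.vecHead, Matrix.vecTail]
  · intro i; fin_cases i <;> simp [e12', Matrix.single, Matrix.vecHead, Matrix.vecTail]

lemma e21'_mem : e21' ∈ slTwo := by
  refine ⟨?_, ?_, ?_⟩
  · simp [sl3, Matrix.trace_fin_three, e21', Matrix.single, Matrix.vecHead, Matrix.vecTail]
  · intro j; fin_cases j <;> simp [e21', Matrix.single, Matrix.vecHead, Matrix.vecTail]
  · intro i; fin_cases i <;> simp [e21', Matrix.single, Matrix.vecHead, Matrix.vecTail]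

lemma hp_mem : hp ∈ slTwo := by
  refine ⟨?_, ?_, ?_⟩
  · simp [sl3, Matrix.trace_fin_three, hp, Matrix.diagonal, Matrix.vecHead, Matrix.vecTail]
  · intro j; fin_cases j <;> simp [hp, Matrix.diagonal, Matrix.vecHead, Matrix.vecTail]
  · intro i; fin_cases i <;> simp [hp, Matrix.diagonal, Matrix.vecHead, Matrix.vecTail]

lemma sPart_mem (X : Matrix (Fin 3) (Fin 3) ℂ) : sPart X ∈ slTwo := by
  refine ⟨?_, ?_, ?_⟩
  · simp [sl3, Matrix.trace_fin_three, sPart, Matrix.vecHead, Matrix.vecTail]; ring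
  · intro j; fin_cases j <;> simp [sPart, Matrix.vecHead, Matrix.vecTail]
  · intro i; fin_cases i <;> simp [sPart, Matrix.vecHead, Matrix.vecTail]

lemma decomp (X : Matrix (Fin 3) (Fin 3) ℂ) (htr : Matrix.trace X = 0) :
    X = sPart X + gen ((X 0 0 + X 1 1)/2) (X 0 2) (X 1 2) (X 2 0) (X 2 1) := by
  have h22 : X 2 2 = -(X 0 0 + X 1 1) := by
    rw [Matrix.trace_fin_three] at htr; linear_combination htr
  ext i j
  fin_cases i <;> fin_cases j <;>
    simp [sPart, gen, e13, e23, e31, e32, hDiag, Matrix.single, Matrix.diagonal, Matrix.vecHead, Matrix.vecTail,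
      h22] <;> ring

lemma br_hp (t a b c d : ℂ) : ⁅hp, gen t a b c d⁆ = gen 0 a (-b) (-c) d := by
  ext i j
  fin_cases i <;> fin_cases j <;>
    simp [Ring.lie_def, gen, Matrix.mul_apply, Fin.sum_univ_three, e13, e23, e31, e32, hp,
      hDiag, Matrix.single, Matrix.diagonal, Matrix.vecHead, Matrix.vecTail] <;> ring_nf

lemma comb1 (t a b c d : ℂ) :
    (1/2 : ℂ) • (gen 0 a (-b) (-c) d + gen 0 a b c d) = a • e13 + d • e32 := by
  simp only [gen]; module

lemma comb2 (t a b c d : ℂ) :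
    (1/2 : ℂ) • (gen 0 a b c d - gen 0 a (-b) (-c) d) = b • e23 + c • e31 := by
  simp only [gen]; module

lemma comb3 (t a b c d : ℂ) : gen t a b c d - gen 0 a b c d = t • hDiag := by
  simp only [gen]; module

lemma br1 : ⁅e21', e13⁆ = e23 := by
  ext i j
  fin_cases i <;> fin_cases j <;>
    simp [Ring.lie_def, Matrix.mul_apply, Fin.sum_univ_three, e13, e23, e21',
      Matrix.single, Matrix.vecHead, Matrix.vecTail]

lemma br2 : ⁅e12', e23⁆ = e13 := by
  ext i j
  fin_cases i <;> fin_cases j <;>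
    simp [Ring.lie_def, Matrix.mul_apply, Fin.sum_univ_three, e13, e23, e12',
      Matrix.single, Matrix.vecHead, Matrix.vecTail]

lemma br3 : e32 = -⁅e12', e31⁆ := by
  ext i j
  fin_cases i <;> fin_cases j <;>
    simp [Ring.lie_def, Matrix.mul_apply, Fin.sum_univ_three, e32, e31, e12',
      Matrix.single, Matrix.vecHead, Matrix.vecTail]

lemma br4 : e31 = -⁅e21', e32⁆ := by
  ext i j
  fin_cases i <;> fin_cases j <;>
    simp [Ring.lie_def, Matrix.mul_apply, Fin.sum_univ_three, e32, e31, e21',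
      Matrix.single, Matrix.vecHead, Matrix.vecTail]

lemma br5 (a d : ℂ) :
    (a*d) • hDiag = -⁅a • e13 + d • e32, ⁅e21', a • e13 + d • e32⁆⁆ := by
  ext i j
  fin_cases i <;> fin_cases j <;>
    simp [Ring.lie_def, Matrix.mul_apply, Fin.sum_univ_three, e13, e32, e21', hDiag,
      Matrix.single, Matrix.diagonal, Matrix.sub_apply, Matrix.add_apply,
      Matrix.smul_apply] <;> ring

lemma br6 (b c : ℂ) :
    (b*c) • hDiag = -⁅b • e23 + c • e31, ⁅e12', b • e23 + c • e31⁆⁆ := by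
  ext i j
  fin_cases i <;> fin_cases j <;>
    simp [Ring.lie_def, Matrix.mul_apply, Fin.sum_univ_three, e23, e31, e12', hDiag,
      Matrix.single, Matrix.diagonal, Matrix.sub_apply, Matrix.add_apply,
      Matrix.smul_apply] <;> ring

lemma br7 (a d : ℂ) : ⁅hDiag, a • e13 + d • e32⁆ = (3*a) • e13 - (3*d) • e32 := by
  ext i j
  fin_cases i <;> fin_cases j <;>
    simp [Ring.lie_def, Matrix.mul_apply, Fin.sum_univ_three, e13, e32, hDiag,
      Matrix.single, Matrix.diagonal, Matrix.sub_apply, Matrix.add_apply,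
      Matrix.smul_apply] <;> ring

lemma br8 (b c : ℂ) : ⁅hDiag, b • e23 + c • e31⁆ = (3*b) • e23 - (3*c) • e31 := by
  ext i j
  fin_cases i <;> fin_cases j <;>
    simp [Ring.lie_def, Matrix.mul_apply, Fin.sum_univ_three, e23, e31, hDiag,
      Matrix.single, Matrix.diagonal, Matrix.sub_apply, Matrix.add_apply,
      Matrix.smul_apply] <;> ring

lemma br9 : hDiag = (2:ℂ) • ⁅e13, e31⁆ - hp := by
  ext i j
  fin_cases i <;> fin_cases j <;>
    simp [Ring.lie_def, Matrix.mul_apply, Fin.sum_univ_three, e13, e31, hDiag, hp,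
      Matrix.single, Matrix.diagonal, Matrix.vecHead, Matrix.vecTail] <;> ring_nf

lemma spanComb (X : Matrix (Fin 3) (Fin 3) ℂ) (htr : Matrix.trace X = 0)
    (h1 : X 0 2 = 0) (h2 : X 1 2 = 0) (h3 : X 2 0 = 0) (h4 : X 2 1 = 0) :
    X = (X 0 1) • e12' + (X 1 0) • e21' + ((X 0 0 - X 1 1)/2) • hp
        + ((X 0 0 + X 1 1)/2) • hDiag := by
  have h22 : X 2 2 = -(X 0 0 + X 1 1) := by
    rw [Matrix.trace_fin_three] at htr; linear_combination htr
  ext i j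
  fin_cases i <;> fin_cases j <;>
    simp [e12', e21', hp, hDiag, Matrix.single, Matrix.diagonal, h1, h2, h3, h4,
      h22] <;> ring



/-- **Classification of Lie subalgebras of `sl(3,ℂ)` of dimension at least `5` containing the
upper-left `sl(2,ℂ)`.** Any such subalgebra is `𝔰 ⊕ V₊`, `𝔰 ⊕ V₋`, `𝔰 ⊕ V₊ ⊕ ℂh`,
`𝔰 ⊕ V₋ ⊕ ℂh`, or all of `sl(3,ℂ)`. -/
theorem subalgebras_containing_sl2
    (L : LieSubalgebra ℂ (Matrix (Fin 3) (Fin 3) ℂ))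
    (hL : (L : Set (Matrix (Fin 3) (Fin 3) ℂ)) ⊆ sl3)
    (hs : slTwo ⊆ (L : Set (Matrix (Fin 3) (Fin 3) ℂ)))
    (hdim : 5 ≤ Module.finrank ℂ L) :
    (L : Set (Matrix (Fin 3) (Fin 3) ℂ)) = sVplus ∨
    (L : Set (Matrix (Fin 3) (Fin 3) ℂ)) = sVminus ∨
    (L : Set (Matrix (Fin 3) (Fin 3) ℂ)) = sVplusH ∨
    (L : Set (Matrix (Fin 3) (Fin 3) ℂ)) = sVminusH ∨
    (L : Set (Matrix (Fin 3) (Fin 3) ℂ)) = sl3 := by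
  classical
  have hm12 : e12' ∈ L := hs e12'_mem
  have hm21 : e21' ∈ L := hs e21'_mem
  have hmhp : hp ∈ L := hs hp_mem
  -- scalar cancellation
  have scal : ∀ (c : ℂ) (M : Matrix (Fin 3) (Fin 3) ℂ), c ≠ 0 → c • M ∈ L → M ∈ L := by
    intro c M hc h
    have := L.smul_mem c⁻¹ h
    rwa [smul_smul, inv_mul_cancel₀ hc, one_smul] at this
  -- purification
  have purify : ∀ X ∈ L, ((X 0 2) • e13 + (X 2 1) • e32 ∈ L) ∧
      ((X 1 2) • e23 + (X 2 0) • e31 ∈ L) ∧ (((X 0 0 + X 1 1)/2) • hDiag ∈ L) := by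
    intro X hX
    have htr : Matrix.trace X = 0 := hL hX
    have hGeq : X - sPart X
        = gen ((X 0 0 + X 1 1)/2) (X 0 2) (X 1 2) (X 2 0) (X 2 1) :=
      sub_eq_iff_eq_add.mpr ((decomp X htr).trans (add_comm _ _))
    have hG : gen ((X 0 0 + X 1 1)/2) (X 0 2) (X 1 2) (X 2 0) (X 2 1) ∈ L := by
      rw [← hGeq]; exact L.sub_mem hX (hs (sPart_mem X))
    have hY : gen 0 (X 0 2) (-(X 1 2)) (-(X 2 0)) (X 2 1) ∈ L := by
      rw [← br_hp]; exact L.lie_mem hmhp hG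
    have hZ : gen 0 (X 0 2) (X 1 2) (X 2 0) (X 2 1) ∈ L := by
      have := L.lie_mem hmhp hY
      rwa [br_hp, neg_neg, neg_neg] at this
    refine ⟨?_, ?_, ?_⟩
    · rw [← comb1 0 (X 0 2) (X 1 2) (X 2 0) (X 2 1)]
      exact L.smul_mem _ (L.add_mem hY hZ)
    · rw [← comb2 0 (X 0 2) (X 1 2) (X 2 0) (X 2 1)]
      exact L.smul_mem _ (L.sub_mem hZ hY)
    · rw [← comb3 ((X 0 0 + X 1 1)/2) (X 0 2) (X 1 2) (X 2 0) (X 2 1)]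
      exact L.sub_mem hG hZ
  -- transfers
  have t23 : e13 ∈ L → e23 ∈ L := fun h => by rw [← br1]; exact L.lie_mem hm21 h
  have t13 : e23 ∈ L → e13 ∈ L := fun h => by rw [← br2]; exact L.lie_mem hm12 h
  have t32 : e31 ∈ L → e32 ∈ L := fun h => by rw [br3]; exact L.neg_mem (L.lie_mem hm12 h)
  have t31 : e32 ∈ L → e31 ∈ L := fun h => by rw [br4]; exact L.neg_mem (L.lie_mem hm21 h)
  -- splitting with hDiag
  have splitP : hDiag ∈ L → ∀ a d : ℂ, a • e13 + d • e32 ∈ L → a • e13 ∈ L := by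
    intro hh a d hW
    have h1 : (3*a) • e13 - (3*d) • e32 ∈ L := by rw [← br7]; exact L.lie_mem hh hW
    have h2 : a • e13 = (1/6 : ℂ) • (((3*a) • e13 - (3*d) • e32)
        + (3:ℂ) • (a • e13 + d • e32)) := by module
    rw [h2]; exact L.smul_mem _ (L.add_mem h1 (L.smul_mem _ hW))
  have splitM : hDiag ∈ L → ∀ b c : ℂ, b • e23 + c • e31 ∈ L → b • e23 ∈ L := by
    intro hh b c hW
    have h1 : (3*b) • e23 - (3*c) • e31 ∈ L := by rw [← br8]; exact L.lie_mem hh hW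
    have h2 : b • e23 = (1/6 : ℂ) • (((3*b) • e23 - (3*c) • e31)
        + (3:ℂ) • (b • e23 + c • e31)) := by module
    rw [h2]; exact L.smul_mem _ (L.add_mem h1 (L.smul_mem _ hW))
  by_cases h13 : e13 ∈ L
  · by_cases h31 : e31 ∈ L
    · -- L = sl3
      right; right; right; right
      apply Set.Subset.antisymm hL
      intro X hX
      have htr : Matrix.trace X = 0 := hX
      have hh : hDiag ∈ L := by
        rw [br9]; exact L.sub_mem (L.smul_mem _ (L.lie_mem h13 h31)) hmhp
      have : sPart X + gen ((X 0 0 + X 1 1)/2) (X 0 2) (X 1 2) (X 2 0) (X 2 1) ∈ L := by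
        refine L.add_mem (hs (sPart_mem X)) ?_
        simp only [gen]
        exact L.add_mem (L.add_mem (L.add_mem (L.add_mem (L.smul_mem _ hh)
          (L.smul_mem _ h13)) (L.smul_mem _ (t23 h13))) (L.smul_mem _ h31))
          (L.smul_mem _ (t32 h31))
      rwa [← decomp X htr] at this
    · -- e13 ∈ L, e31 ∉ L
      have h23 : e23 ∈ L := t23 h13
      have h32n : e32 ∉ L := fun h => h31 (t31 h)
      have key : ∀ X ∈ L, X 2 0 = 0 ∧ X 2 1 = 0 := by
        intro X hX
        obtain ⟨P1, P2, _⟩ := purify X hX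
        constructor
        · have hc : (X 2 0) • e31 ∈ L := by
            have := L.sub_mem P2 (L.smul_mem (X 1 2) h23)
            simpa using this
          by_contra hc0
          exact h31 (scal _ _ hc0 hc)
        · have hd : (X 2 1) • e32 ∈ L := by
            have := L.sub_mem P1 (L.smul_mem (X 0 2) h13)
            simpa using this
          by_contra hd0
          exact h32n (scal _ _ hd0 hd)
      by_cases hh : hDiag ∈ L
      · right; right; left
        apply Set.Subset.antisymm
        · intro X hX
          obtain ⟨hc, hd⟩ := key X hX
          have htr : Matrix.trace X = 0 := hL hX
          exact ⟨sPart X, sPart_mem X, X 0 2, X 1 2, (X 0 0 + X 1 1)/2,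
            (decomp X htr).trans (by rw [hc, hd]; simp only [gen]; module)⟩
        · rintro X ⟨s, hsm, c1, c2, c3, rfl⟩
          exact L.add_mem (L.add_mem (L.add_mem (hs hsm) (L.smul_mem _ h13))
            (L.smul_mem _ h23)) (L.smul_mem _ hh)
      · left
        apply Set.Subset.antisymm
        · intro X hX
          obtain ⟨hc, hd⟩ := key X hX
          obtain ⟨_, _, P3⟩ := purify X hX
          have ht : (X 0 0 + X 1 1)/2 = 0 := by
            by_contra ht0; exact hh (scal _ _ ht0 P3)
          have htr : Matrix.trace X = 0 := hL hX
          exact ⟨sPart X, sPart_mem X, X 0 2, X 1 2,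
            (decomp X htr).trans (by rw [hc, hd, ht]; simp only [gen]; module)⟩
        · rintro X ⟨s, hsm, c1, c2, rfl⟩
          exact L.add_mem (L.add_mem (hs hsm) (L.smul_mem _ h13)) (L.smul_mem _ h23)
  · by_cases h31 : e31 ∈ L
    · -- e13 ∉ L, e31 ∈ L
      have h32 : e32 ∈ L := t32 h31
      have h23n : e23 ∉ L := fun h => h13 (t13 h)
      have key : ∀ X ∈ L, X 0 2 = 0 ∧ X 1 2 = 0 := by
        intro X hX
        obtain ⟨P1, P2, _⟩ := purify X hX
        constructor
        · have ha : (X 0 2) • e13 ∈ L := by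
            have := L.sub_mem P1 (L.smul_mem (X 2 1) h32)
            simpa using this
          by_contra ha0
          exact h13 (scal _ _ ha0 ha)
        · have hb : (X 1 2) • e23 ∈ L := by
            have := L.sub_mem P2 (L.smul_mem (X 2 0) h31)
            simpa using this
          by_contra hb0
          exact h23n (scal _ _ hb0 hb)
      by_cases hh : hDiag ∈ L
      · right; right; right; left
        apply Set.Subset.antisymm
        · intro X hX
          obtain ⟨ha, hb⟩ := key X hX
          have htr : Matrix.trace X = 0 := hL hX
          exact ⟨sPart X, sPart_mem X, X 2 0, X 2 1, (X 0 0 + X 1 1)/2,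
            (decomp X htr).trans (by rw [ha, hb]; simp only [gen]; module)⟩
        · rintro X ⟨s, hsm, c1, c2, c3, rfl⟩
          exact L.add_mem (L.add_mem (L.add_mem (hs hsm) (L.smul_mem _ h31))
            (L.smul_mem _ h32)) (L.smul_mem _ hh)
      · right; left
        apply Set.Subset.antisymm
        · intro X hX
          obtain ⟨ha, hb⟩ := key X hX
          obtain ⟨_, _, P3⟩ := purify X hX
          have ht : (X 0 0 + X 1 1)/2 = 0 := by
            by_contra ht0; exact hh (scal _ _ ht0 P3)
          have htr : Matrix.trace X = 0 := hL hX
          exact ⟨sPart X, sPart_mem X, X 2 0, X 2 1,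
            (decomp X htr).trans (by rw [ha, hb, ht]; simp only [gen]; module)⟩
        · rintro X ⟨s, hsm, c1, c2, rfl⟩
          exact L.add_mem (L.add_mem (hs hsm) (L.smul_mem _ h31)) (L.smul_mem _ h32)
    · -- neither: contradiction with dimension
      exfalso
      have h23n : e23 ∉ L := fun h => h13 (t13 h)
      have h32n : e32 ∉ L := fun h => h31 (t31 h)
      have keyP : ∀ a d : ℂ, a • e13 + d • e32 ∈ L → a = 0 ∧ d = 0 := by
        intro a d hW
        have ha : a = 0 := by
          by_contra ha0
          by_cases hd0 : d = 0
          · rw [hd0, zero_smul, add_zero] at hW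
            exact h13 (scal _ _ ha0 hW)
          · have hhd : hDiag ∈ L := by
              refine scal (a*d) _ (mul_ne_zero ha0 hd0) ?_
              rw [br5]
              exact L.neg_mem (L.lie_mem hW (L.lie_mem hm21 hW))
            exact h13 (scal _ _ ha0 (splitP hhd a d hW))
        refine ⟨ha, ?_⟩
        rw [ha, zero_smul, zero_add] at hW
        by_contra hd0
        exact h32n (scal _ _ hd0 hW)
      have keyM : ∀ b c : ℂ, b • e23 + c • e31 ∈ L → b = 0 ∧ c = 0 := by
        intro b c hW
        have hb : b = 0 := by
          by_contra hb0
          by_cases hc0 : c = 0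
          · rw [hc0, zero_smul, add_zero] at hW
            exact h23n (scal _ _ hb0 hW)
          · have hhd : hDiag ∈ L := by
              refine scal (b*c) _ (mul_ne_zero hb0 hc0) ?_
              rw [br6]
              exact L.neg_mem (L.lie_mem hW (L.lie_mem hm12 hW))
            exact h23n (scal _ _ hb0 (splitM hhd b c hW))
        refine ⟨hb, ?_⟩
        rw [hb, zero_smul, zero_add] at hW
        by_contra hc0
        exact h31 (scal _ _ hc0 hW)
      -- L is contained in a 4-dimensional space
      have hle : L.toSubmodule ≤ Submodule.span ℂ (Set.range ![e12', e21', hp, hDiag]) := by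
        intro X hX
        have hX' : X ∈ L := hX
        obtain ⟨P1, P2, _⟩ := purify X hX'
        obtain ⟨ha, hd⟩ := keyP _ _ P1
        obtain ⟨hb, hc⟩ := keyM _ _ P2
        rw [spanComb X (hL hX') ha hb hc hd]
        have m0 : e12' ∈ Submodule.span ℂ (Set.range ![e12', e21', hp, hDiag]) :=
          Submodule.subset_span ⟨0, rfl⟩
        have m1 : e21' ∈ Submodule.span ℂ (Set.range ![e12', e21', hp, hDiag]) :=
          Submodule.subset_span ⟨1, rfl⟩
        have m2 : hp ∈ Submodule.span ℂ (Set.range ![e12', e21', hp, hDiag]) :=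
          Submodule.subset_span ⟨2, rfl⟩
        have m3 : hDiag ∈ Submodule.span ℂ (Set.range ![e12', e21', hp, hDiag]) :=
          Submodule.subset_span ⟨3, rfl⟩
        exact Submodule.add_mem _ (Submodule.add_mem _ (Submodule.add_mem _
          (Submodule.smul_mem _ _ m0) (Submodule.smul_mem _ _ m1))
          (Submodule.smul_mem _ _ m2)) (Submodule.smul_mem _ _ m3)
      have h4 : Module.finrank ℂ L ≤ 4 := by
        have h1 := Submodule.finrank_mono hle
        have h2 := finrank_range_le_card (R := ℂ) ![e12', e21', hp, hDiag]
        simp only [Set.finrank] at h2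
        have h3 : Module.finrank ℂ L = Module.finrank ℂ L.toSubmodule := rfl
        rw [h3]
        calc Module.finrank ℂ L.toSubmodule
            ≤ Module.finrank ℂ (Submodule.span ℂ (Set.range ![e12', e21', hp, hDiag])) := h1
          _ ≤ Fintype.card (Fin 4) := h2
          _ = 4 := by simp
      omega
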